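/- Any two linear extensions of a finite partial order are connected by adjacent transpositions of incomparable elements: let ≤ be a partial order on a finite set E, and let L and L' be two linear extensions of ≤ (lists enumerating E without repetition whose induced total orders contain ≤). Then there is a finite sequence of lists L = L_0, L_1, …, L_n = L', each a linear extension of ≤, such that for each i, L_{i+1} is obtained from L_i by transposing two adjacent elements that are incomparable under ≤. -/

import Mathlib

/-- `L` is a linear extension of the partial order `≤` on the finite type `E`:
it enumerates every element exactly once, and whenever `x ≤ y` with `x ≠ y`,
`x` occurs before `y` in `L`. -/
def IsLinExt {E : Type*} [PartialOrder E] (L : List E) : Prop :=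
  L.Nodup ∧ (∀ x : E, x ∈ L) ∧
    ∀ x y : E, x ≤ y → x ≠ y → List.Sublist [x, y] L

/-- `x` and `y` are incomparable under the partial order. -/
def Incomp {E : Type*} [PartialOrder E] (x y : E) : Prop :=
  x ≠ y ∧ ¬ x ≤ y ∧ ¬ y ≤ x

open List

lemma pair_sublist_iff_indexOf {α : Type*} [DecidableEq α] {L : List α} (hL : L.Nodup)
    {x y : α} (hx : x ∈ L) (hy : y ∈ L) (hxy : x ≠ y) :
    [x, y] <+ L ↔ L.idxOf x < L.idxOf y := by
  induction L with
  | nil => simp at hx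
  | cons a t ih =>
    rw [List.nodup_cons] at hL
    by_cases hax : a = x
    · subst hax
      have hyt : y ∈ t := by
        rcases List.mem_cons.1 hy with h | h
        · exact absurd h.symm hxy
        · exact h
      simp only [List.idxOf_cons_self]
      rw [List.idxOf_cons_ne _ hxy]
      constructor
      · intro _; omega
      · intro _
        exact List.Sublist.cons₂ _ (List.singleton_sublist.2 hyt)
    · by_cases hay : a = y
      · subst hay
        simp only [List.idxOf_cons_self]
        constructor
        · intro h
          cases h with
          | cons _ h' =>
            exact absurd (h'.subset (by simp)) hL.1
          | cons_cons _ h' => exact absurd rfl hxy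
        · omega
      · have hxt : x ∈ t := by
          rcases List.mem_cons.1 hx with h | h
          · exact absurd h.symm hax
          · exact h
        have hyt : y ∈ t := by
          rcases List.mem_cons.1 hy with h | h
          · exact absurd h.symm hay
          · exact h
        rw [List.idxOf_cons_ne _ hax, List.idxOf_cons_ne _ hay]
        rw [Nat.succ_lt_succ_iff]
        rw [← ih hL.2 hxt hyt]
        constructor
        · intro h
          cases h with
          | cons _ h' => exact h'
          | cons_cons _ h' => exact absurd rfl hax
        · exact fun h => h.cons a

lemma pair_not_both {α : Type*} {L : List α} (hL : L.Nodup) {x y : α} (hxy : x ≠ y)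
    (h1 : [x, y] <+ L) (h2 : [y, x] <+ L) : False := by
  classical
  have hx : x ∈ L := h1.subset (by simp)
  have hy : y ∈ L := h1.subset (by simp)
  have := (pair_sublist_iff_indexOf hL hx hy hxy).1 h1
  have := (pair_sublist_iff_indexOf hL hy hx (Ne.symm hxy)).1 h2
  omega

lemma indexOf_swap_eq {α : Type*} [DecidableEq α] (u v : List α) (a b z : α)
    (hza : z ≠ a) (hzb : z ≠ b) :
    (u ++ b :: a :: v).idxOf z = (u ++ a :: b :: v).idxOf z := by
  by_cases hzu : z ∈ u
  · rw [List.idxOf_append_of_mem hzu, List.idxOf_append_of_mem hzu]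
  · rw [List.idxOf_append_of_notMem hzu, List.idxOf_append_of_notMem hzu,
      List.idxOf_cons_ne _ (Ne.symm hzb), List.idxOf_cons_ne _ (Ne.symm hza),
      List.idxOf_cons_ne _ (Ne.symm hza), List.idxOf_cons_ne _ (Ne.symm hzb)]

lemma indexOf_middle {α : Type*} [DecidableEq α] (u v : List α) (a b : α)
    (hau : a ∉ u) (hbu : b ∉ u) (hab : a ≠ b) :
    (u ++ a :: b :: v).idxOf a = u.length ∧
    (u ++ a :: b :: v).idxOf b = u.length + 1 := by
  constructor
  · rw [List.idxOf_append_of_notMem hau, List.idxOf_cons_self]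
    omega
  · rw [List.idxOf_append_of_notMem hbu, List.idxOf_cons_ne _ hab,
      List.idxOf_cons_self]

lemma isLinExt_swap {E : Type*} [PartialOrder E] {u v : List E} {a b : E}
    (h : IsLinExt (u ++ a :: b :: v)) (hab : Incomp a b) :
    IsLinExt (u ++ b :: a :: v) := by
  classical
  obtain ⟨hnd, hmem, hord⟩ := h
  have hperm : (u ++ a :: b :: v).Perm (u ++ b :: a :: v) :=
    List.Perm.append_left u (List.Perm.swap b a v)
  have hnd2 : (u ++ b :: a :: v).Nodup := hperm.nodup_iff.1 hnd
  have hmem2 : ∀ x : E, x ∈ u ++ b :: a :: v := fun x => hperm.mem_iff.1 (hmem x)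
  refine ⟨hnd2, hmem2, fun x y hxy hne => ?_⟩
  have hdisj := List.disjoint_of_nodup_append hnd
  have hau : a ∉ u := fun h => hdisj h (by simp)
  have hbu : b ∉ u := fun h => hdisj h (by simp)
  have habne : a ≠ b := hab.1
  obtain ⟨ia1, ib1⟩ := indexOf_middle u v a b hau hbu habne
  obtain ⟨ib2, ia2⟩ := indexOf_middle u v b a hbu hau habne.symm
  have h1 : (u ++ a :: b :: v).idxOf x < (u ++ a :: b :: v).idxOf y :=
    (pair_sublist_iff_indexOf hnd (hmem x) (hmem y) hne).1 (hord x y hxy hne)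
  rw [pair_sublist_iff_indexOf hnd2 (hmem2 x) (hmem2 y) hne]
  have hinj1 : ∀ p q : E, (u ++ a :: b :: v).idxOf p = (u ++ a :: b :: v).idxOf q → p = q :=
    fun p q hpq => (List.idxOf_inj (hmem p)).1 hpq
  have hswap : ∀ z : E, z ≠ a → z ≠ b →
      (u ++ b :: a :: v).idxOf z = (u ++ a :: b :: v).idxOf z :=
    fun z => indexOf_swap_eq u v a b z
  by_cases hxa : x = a
  · by_cases hyb : y = b
    · rw [hxa, hyb] at hxy; exact absurd hxy hab.2.1
    · have hya : y ≠ a := fun hc => hne (hxa.trans hc.symm)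
      rw [hxa, ia2, hswap y hya hyb]
      rw [hxa, ia1] at h1
      have : (u ++ a :: b :: v).idxOf y ≠ u.length + 1 := fun hc =>
        hyb (hinj1 y b (by rw [hc, ib1]))
      omega
  · by_cases hxb : x = b
    · by_cases hya : y = a
      · rw [hxb, hya] at hxy; exact absurd hxy hab.2.2
      · have hyb : y ≠ b := fun hc => hne (hxb.trans hc.symm)
        rw [hxb, ib2, hswap y hya hyb]
        rw [hxb, ib1] at h1
        omega
    · rw [hswap x hxa hxb]
      by_cases hya : y = a
      · rw [hya, ia2]
        rw [hya, ia1] at h1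
        have : (u ++ a :: b :: v).idxOf x ≠ u.length + 1 := fun hc =>
          hxb (hinj1 x b (by rw [hc, ib1]))
        omega
      · by_cases hyb : y = b
        · rw [hyb, ib2]
          rw [hyb, ib1] at h1
          have : (u ++ a :: b :: v).idxOf x ≠ u.length := fun hc =>
            hxa (hinj1 x a (by rw [hc, ia1]))
          omega
        · rw [hswap y hya hyb]
          exact h1

def Step {E : Type*} [PartialOrder E] (L₁ L₂ : List E) : Prop :=
  IsLinExt L₁ ∧ IsLinExt L₂ ∧
    ∃ (u v : List E) (x y : E), Incomp x y ∧
      L₁ = u ++ [x, y] ++ v ∧ L₂ = u ++ [y, x] ++ v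

lemma bubble {E : Type*} [PartialOrder E] {x : E} (u : List E) (p : List E) :
    ∀ q : List E, IsLinExt (u ++ p ++ x :: q) → (∀ y ∈ p, Incomp y x) →
    Relation.ReflTransGen Step (u ++ p ++ x :: q) (u ++ x :: (p ++ q)) ∧
      IsLinExt (u ++ x :: (p ++ q)) := by
  induction p using List.reverseRecOn with
  | nil =>
    intro q h _
    simp only [List.append_nil, List.nil_append]
    refine ⟨Relation.ReflTransGen.refl, by simpa using h⟩
  | append_singleton p₀ y ih =>
    intro q h hin
    have hy : Incomp y x := hin y (by simp)
    have h1 : IsLinExt ((u ++ p₀) ++ y :: x :: q) := by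
      have e : u ++ (p₀ ++ [y]) ++ x :: q = (u ++ p₀) ++ y :: x :: q := by simp
      rwa [e] at h
    have h2 : IsLinExt ((u ++ p₀) ++ x :: y :: q) := isLinExt_swap h1 hy
    have h2' : IsLinExt (u ++ p₀ ++ x :: (y :: q)) := by
      exact h2
    obtain ⟨htr, hfin⟩ := ih (y :: q) h2' (fun z hz => hin z (by simp [hz]))
    have hstep : Step (u ++ (p₀ ++ [y]) ++ x :: q) (u ++ p₀ ++ x :: (y :: q)) := by
      refine ⟨h, h2', u ++ p₀, q, y, x, hy, ?_, ?_⟩ <;> simp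
    have hfin' : IsLinExt (u ++ x :: (p₀ ++ [y] ++ q)) := by
      have e : u ++ x :: (p₀ ++ [y] ++ q) = u ++ x :: (p₀ ++ y :: q) := by simp
      rwa [e]
    refine ⟨?_, hfin'⟩
    have htr' : Relation.ReflTransGen Step (u ++ p₀ ++ x :: (y :: q))
        (u ++ x :: (p₀ ++ [y] ++ q)) := by
      have e : u ++ x :: (p₀ ++ [y] ++ q) = u ++ x :: (p₀ ++ y :: q) := by simp
      rw [e]; exact htr
    exact Relation.ReflTransGen.head hstep htr'

lemma aux_connect {E : Type*} [PartialOrder E] :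
    ∀ (n : ℕ) (u M M' : List E), M.length ≤ n → IsLinExt (u ++ M) → IsLinExt (u ++ M') →
    Relation.ReflTransGen Step (u ++ M) (u ++ M') := by
  intro n
  induction n with
  | zero =>
    intro u M M' hlen h h'
    have hM : M = [] := List.eq_nil_of_length_eq_zero (Nat.le_zero.1 hlen)
    subst hM
    have hp : (u ++ ([] : List E)).Perm (u ++ M') :=
      (List.perm_ext_iff_of_nodup h.1 h'.1).2 fun a => iff_of_true (h.2.1 a) (h'.2.1 a)
    have : M' = [] := by
      have := hp.length_eq
      simp at this
      exact this
    rw [this]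
  | succ n ih =>
    intro u M M' hlen h h'
    have hp : (u ++ M).Perm (u ++ M') :=
      (List.perm_ext_iff_of_nodup h.1 h'.1).2 fun a => iff_of_true (h.2.1 a) (h'.2.1 a)
    have hMM' : M.Perm M' := (List.perm_append_left_iff u).1 hp
    cases M' with
    | nil =>
      have : M = [] := hMM'.eq_nil
      rw [this]
    | cons x t' =>
      have hxM : x ∈ M := hMM'.mem_iff.2 (by simp)
      obtain ⟨p, q, rfl⟩ := List.append_of_mem hxM
      have hndM : (p ++ x :: q).Nodup := (List.nodup_append.1 h.1).2.1
      have hdisj : List.Disjoint p (x :: q) := List.disjoint_of_nodup_append hndM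
      have hin : ∀ y ∈ p, Incomp y x := by
        intro y hyp
        have hyx : y ≠ x := fun hc => hdisj hyp (by simp [hc])
        refine ⟨hyx, ?_, ?_⟩
        · -- ¬ y ≤ x
          intro hle
          have hs := h'.2.2 y x hle hyx
          have hyM' : y ∈ x :: t' := hMM'.mem_iff.1 (by simp [hyp])
          have hyt' : y ∈ t' := by
            rcases List.mem_cons.1 hyM' with hc | hc
            · exact absurd hc hyx
            · exact hc
          have hs2 : [x, y] <+ u ++ x :: t' :=
            ((List.singleton_sublist.2 hyt').cons₂ x).trans (List.sublist_append_right u _)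
          exact pair_not_both h'.1 (Ne.symm hyx) hs2 hs
        · -- ¬ x ≤ y
          intro hle
          have hs := h.2.2 x y hle (Ne.symm hyx)
          have h1 : [y] ++ [x] <+ p ++ x :: q :=
            List.Sublist.append (List.singleton_sublist.2 hyp)
              (List.singleton_sublist.2 (by simp))
          have hs2 : [y, x] <+ u ++ (p ++ x :: q) :=
            h1.trans (List.sublist_append_right u _)
          exact pair_not_both h.1 hyx hs2 hs
      have h0 : IsLinExt (u ++ p ++ x :: q) := by rwa [List.append_assoc]
      obtain ⟨htr, hfin⟩ := bubble u p q h0 hin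
      have hlen' : (p ++ q).length ≤ n := by
        simp only [List.length_append, List.length_cons] at hlen ⊢
        omega
      have hfin' : IsLinExt ((u ++ [x]) ++ (p ++ q)) := by
        have e : (u ++ [x]) ++ (p ++ q) = u ++ x :: (p ++ q) := by simp
        rw [e]; exact hfin
      have hR' : IsLinExt ((u ++ [x]) ++ t') := by
        have e : (u ++ [x]) ++ t' = u ++ x :: t' := by simp
        rw [e]; exact h'
      have h2 := ih (u ++ [x]) (p ++ q) t' hlen' hfin' hR'
      have e1 : u ++ (p ++ x :: q) = u ++ p ++ x :: q := by simp
      have e2 : (u ++ [x]) ++ (p ++ q) = u ++ x :: (p ++ q) := by simp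
      have e3 : (u ++ [x]) ++ t' = u ++ x :: t' := by simp
      rw [e1]
      rw [e2, e3] at h2
      exact htr.trans h2

/-- Any two linear extensions of a finite partial order are connected by a
sequence of adjacent transpositions of incomparable elements, all intermediate
lists being linear extensions. -/
theorem linear_extensions_connected {E : Type*} [Fintype E] [PartialOrder E]
    (L L' : List E) (hL : IsLinExt L) (hL' : IsLinExt L') :
    Relation.ReflTransGen
      (fun L₁ L₂ : List E => IsLinExt L₁ ∧ IsLinExt L₂ ∧
        ∃ (u v : List E) (x y : E), Incomp x y ∧
          L₁ = u ++ [x, y] ++ v ∧ L₂ = u ++ [y, x] ++ v)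
      L L' := by
  have h := aux_connect L.length [] L L' le_rfl (by simpa) (by simpa)
  simp only [List.nil_append] at h
  exact h
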